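/- arXiv:2306.01963 — 3 statements merged into one kernel-verified Lean document; each statement's English description precedes it below -/
import Mathlib

section
/- Let J₀(x) := (1/(2π)) ∫₀^{2π} cos(x·sin t) dt. Then for every real x, (1/(2π)²) ∫₀^{2π} ∫₀^{2π} cos(x·sin θ·sin φ) dφ dθ = J₀(x/2)². Equivalently, if (θ, φ) is uniformly distributed on [0,2π]², then E[cos(x·sin θ·sin φ)] = J₀(x/2)². -/
open Real MeasureTheory intervalIntegral

/-- Bessel function of the first kind of order zero (integral representation). -/
noncomputable def J₀ (x : ℝ) : ℝ :=
  (1 / (2 * π)) * ∫ t in (0:ℝ)..(2 * π), Real.cos (x * Real.sin t)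

private lemma shift_per {g : ℝ → ℝ} (hg : Function.Periodic g (2*π)) (t : ℝ) :
    ∫ s in t..t+2*π, g s = ∫ s in (0:ℝ)..2*π, g s := by
  simpa using hg.intervalIntegral_add_eq t 0

private lemma sin_int_zero (c : ℝ) : (∫ t in (0:ℝ)..2*π, Real.sin (c * Real.cos t)) = 0 := by
  have h1 : IntervalIntegrable (fun t => Real.sin (c * Real.cos t)) volume 0 π :=
    (by fun_prop : Continuous fun t => Real.sin (c * Real.cos t)).intervalIntegrable _ _
  have h2 : IntervalIntegrable (fun t => Real.sin (c * Real.cos t)) volume π (2*π) :=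
    (by fun_prop : Continuous fun t => Real.sin (c * Real.cos t)).intervalIntegrable _ _
  have hsplit := integral_add_adjacent_intervals h1 h2
  have hshift : (∫ t in (0:ℝ)..π, Real.sin (c * Real.cos (t + π)))
      = ∫ t in π..2*π, Real.sin (c * Real.cos t) := by
    have := integral_comp_add_right (fun t => Real.sin (c * Real.cos t)) π (a := 0) (b := π)
    simpa [two_mul] using this
  have hneg : (∫ t in (0:ℝ)..π, Real.sin (c * Real.cos (t + π)))
      = -∫ t in (0:ℝ)..π, Real.sin (c * Real.cos t) := by
    rw [← intervalIntegral.integral_neg]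
    congr 1
    ext t
    rw [Real.cos_add_pi]
    simp [mul_neg]
  rw [← hsplit, ← hshift, hneg]
  ring

private lemma cos_cos_eq_cos_sin (c : ℝ) :
    (∫ t in (0:ℝ)..2*π, Real.cos (c * Real.cos t))
      = ∫ t in (0:ℝ)..2*π, Real.cos (c * Real.sin t) := by
  have h1 : (∫ t in (0:ℝ)..2*π, Real.cos (c * Real.sin (t + π/2)))
      = ∫ t in (π/2)..(2*π + π/2), Real.cos (c * Real.sin t) := by
    simpa using integral_comp_add_right (fun t => Real.cos (c * Real.sin t)) (π/2)
      (a := 0) (b := 2*π)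
  have hper : Function.Periodic (fun t => Real.cos (c * Real.sin t)) (2*π) := by
    intro t; simp [Real.sin_add_two_pi]
  have h2 : (∫ t in (π/2)..(2*π + π/2), Real.cos (c * Real.sin t))
      = ∫ t in (0:ℝ)..2*π, Real.cos (c * Real.sin t) := by
    have := shift_per hper (π/2)
    rw [← this]
    congr 1
    ring
  have h3 : ∀ t : ℝ, Real.sin (t + π/2) = Real.cos t := fun t => Real.sin_add_pi_div_two t
  calc (∫ t in (0:ℝ)..2*π, Real.cos (c * Real.cos t))
      = ∫ t in (0:ℝ)..2*π, Real.cos (c * Real.sin (t + π/2)) := by simp_rw [h3]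
    _ = ∫ t in (0:ℝ)..2*π, Real.cos (c * Real.sin t) := by rw [h1, h2]

set_option maxHeartbeats 1000000 in
theorem stmt_0 (x : ℝ) :
    (1 / (2 * π) ^ 2) *
      ∫ θ in (0:ℝ)..(2 * π), ∫ φ in (0:ℝ)..(2 * π),
        Real.cos (x * Real.sin θ * Real.sin φ)
    = (J₀ (x / 2)) ^ 2 := by
  set a := x / 2 with ha
  set C := ∫ t in (0:ℝ)..2*π, Real.cos (a * Real.cos t) with hC
  -- Step 1: pointwise rewrite
  have key : ∀ θ φ : ℝ, x * Real.sin θ * Real.sin φ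
      = a * Real.cos (θ - φ) - a * Real.cos (θ + φ) := by
    intro θ φ
    rw [Real.cos_sub, Real.cos_add, ha]
    ring
  -- Step 2: inner integral as integral of shifted function
  have step2 : ∀ θ : ℝ, (∫ φ in (0:ℝ)..2*π,
      Real.cos (a * Real.cos (θ - φ) - a * Real.cos (θ + φ)))
      = ∫ ψ in (0:ℝ)..2*π, Real.cos (a * Real.cos ψ - a * Real.cos (2*θ - ψ)) := by
    intro θ
    have hg : ∀ φ : ℝ, Real.cos (a * Real.cos (θ - φ) - a * Real.cos (θ + φ))
        = (fun ψ => Real.cos (a * Real.cos ψ - a * Real.cos (2*θ - ψ))) (θ - φ) := by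
      intro φ
      have : 2*θ - (θ - φ) = θ + φ := by ring
      simp only [this]
    simp_rw [hg]
    rw [integral_comp_sub_left (fun ψ => Real.cos (a * Real.cos ψ - a * Real.cos (2*θ - ψ))) θ]
    have hper : Function.Periodic
        (fun ψ => Real.cos (a * Real.cos ψ - a * Real.cos (2*θ - ψ))) (2*π) := by
      intro t
      have h1 : Real.cos (t + 2*π) = Real.cos t := Real.cos_add_two_pi t
      have h2 : Real.cos (2*θ - (t + 2*π)) = Real.cos (2*θ - t) := by
        have : 2*θ - (t + 2*π) = (2*θ - t) - 2*π := by ring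
        rw [this, Real.cos_sub_two_pi]
      simp only [h1, h2]
    have := shift_per hper (θ - 2*π)
    rw [← this]
    congr 1 <;> ring
  -- Fubini swap setup
  have h2pi : (0:ℝ) ≤ 2*π := by positivity
  have hcont : Continuous (Function.uncurry fun θ ψ =>
      Real.cos (a * Real.cos ψ - a * Real.cos (2*θ - ψ))) := by
    apply Real.continuous_cos.comp
    fun_prop
  have hfin : IsFiniteMeasure (volume.restrict (Set.Ioc (0:ℝ) (2*π))) := by
    constructor
    rw [Measure.restrict_apply_univ]
    exact measure_Ioc_lt_top
  have hint : Integrable (Function.uncurry fun θ ψ =>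
      Real.cos (a * Real.cos ψ - a * Real.cos (2*θ - ψ)))
      ((volume.restrict (Set.Ioc (0:ℝ) (2*π))).prod
        (volume.restrict (Set.Ioc (0:ℝ) (2*π)))) := by
    refine (integrable_const (1:ℝ)).mono' hcont.aestronglyMeasurable ?_
    filter_upwards with p
    simpa [Function.uncurry] using Real.abs_cos_le_one _
  -- Step 4+5: inner integral over θ for fixed ψ
  have step45 : ∀ ψ : ℝ, (∫ θ in (0:ℝ)..2*π,
      Real.cos (a * Real.cos ψ - a * Real.cos (2*θ - ψ)))
      = Real.cos (a * Real.cos ψ) * C := by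
    intro ψ
    have hcomp := integral_comp_mul_sub
      (fun t => Real.cos (a * Real.cos ψ - a * Real.cos t)) (two_ne_zero) ψ
      (a := 0) (b := 2*π)
    have hperh : Function.Periodic (fun t => Real.cos (a * Real.cos ψ - a * Real.cos t)) (2*π) := by
      intro t; simp [Real.cos_add_two_pi]
    have hih : ∀ t₁ t₂ : ℝ, IntervalIntegrable
        (fun t => Real.cos (a * Real.cos ψ - a * Real.cos t)) volume t₁ t₂ :=
      fun t₁ t₂ => (by fun_prop :
        Continuous fun t => Real.cos (a * Real.cos ψ - a * Real.cos t)).intervalIntegrable _ _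
    have hsplit : (∫ t in (2*0 - ψ)..(2*(2*π) - ψ),
        Real.cos (a * Real.cos ψ - a * Real.cos t))
        = 2 * ∫ t in (0:ℝ)..2*π, Real.cos (a * Real.cos ψ - a * Real.cos t) := by
      have e1 : (∫ t in (2*0 - ψ)..(2*0 - ψ + 2*π),
          Real.cos (a * Real.cos ψ - a * Real.cos t))
          = ∫ t in (0:ℝ)..2*π, Real.cos (a * Real.cos ψ - a * Real.cos t) :=
        shift_per hperh _
      have e2 : (∫ t in (2*0 - ψ + 2*π)..(2*0 - ψ + 2*π + 2*π),
          Real.cos (a * Real.cos ψ - a * Real.cos t))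
          = ∫ t in (0:ℝ)..2*π, Real.cos (a * Real.cos ψ - a * Real.cos t) :=
        shift_per hperh _
      have hadd := integral_add_adjacent_intervals
        (hih (2*0 - ψ) (2*0 - ψ + 2*π)) (hih (2*0 - ψ + 2*π) (2*0 - ψ + 2*π + 2*π))
      have hb : 2*0 - ψ + 2*π + 2*π = 2*(2*π) - ψ := by ring
      rw [hb] at hadd
      rw [hb] at e2
      rw [← hadd, e1, e2]
      ring
    rw [hcomp, hsplit]
    have expand : ∀ t : ℝ, Real.cos (a * Real.cos ψ - a * Real.cos t)
        = Real.cos (a * Real.cos ψ) * Real.cos (a * Real.cos t)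
          + Real.sin (a * Real.cos ψ) * Real.sin (a * Real.cos t) := by
      intro t; rw [Real.cos_sub]
    have hC' : (∫ t in (0:ℝ)..2*π, Real.cos (a * Real.cos ψ - a * Real.cos t))
        = Real.cos (a * Real.cos ψ) * C := by
      simp_rw [expand]
      rw [integral_add
        (((by fun_prop : Continuous fun t => Real.cos (a * Real.cos ψ) *
            Real.cos (a * Real.cos t))).intervalIntegrable _ _)
        (((by fun_prop : Continuous fun t => Real.sin (a * Real.cos ψ) *
            Real.sin (a * Real.cos t))).intervalIntegrable _ _),
        intervalIntegral.integral_const_mul, intervalIntegral.integral_const_mul, sin_int_zero, hC]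
      ring
    rw [hC']
    simp
  -- Assemble
  have hswap : (∫ θ in (0:ℝ)..2*π, ∫ ψ in (0:ℝ)..2*π,
      Real.cos (a * Real.cos ψ - a * Real.cos (2*θ - ψ)))
      = ∫ ψ in (0:ℝ)..2*π, ∫ θ in (0:ℝ)..2*π,
        Real.cos (a * Real.cos ψ - a * Real.cos (2*θ - ψ)) := by
    simp_rw [integral_of_le h2pi]
    exact integral_integral_swap hint
  have main : (∫ θ in (0:ℝ)..(2*π), ∫ φ in (0:ℝ)..(2*π),
      Real.cos (x * Real.sin θ * Real.sin φ)) = C * C := by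
    calc (∫ θ in (0:ℝ)..(2*π), ∫ φ in (0:ℝ)..(2*π), Real.cos (x * Real.sin θ * Real.sin φ))
        = ∫ θ in (0:ℝ)..2*π, ∫ φ in (0:ℝ)..2*π,
            Real.cos (a * Real.cos (θ - φ) - a * Real.cos (θ + φ)) := by
          simp_rw [key]
      _ = ∫ θ in (0:ℝ)..2*π, ∫ ψ in (0:ℝ)..2*π,
            Real.cos (a * Real.cos ψ - a * Real.cos (2*θ - ψ)) := by
          simp_rw [step2]
      _ = ∫ ψ in (0:ℝ)..2*π, ∫ θ in (0:ℝ)..2*π,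
            Real.cos (a * Real.cos ψ - a * Real.cos (2*θ - ψ)) := hswap
      _ = ∫ ψ in (0:ℝ)..2*π, Real.cos (a * Real.cos ψ) * C := by
          simp_rw [step45]
      _ = C * C := by rw [intervalIntegral.integral_mul_const, hC]
  rw [main]
  have hCs : C = ∫ t in (0:ℝ)..2*π, Real.cos (a * Real.sin t) := cos_cos_eq_cos_sin a
  rw [J₀, ← hCs]
  ring
end

section
/- Let (θ₁, φ₁) and (θ₂, φ₂) be independent, each uniformly distributed on [0,2π]², and set h₁ := sin θ₁·sin φ₁, h₂ := sin θ₂·sin φ₂. Then for every real a, E[cos(a·(h₁ − h₂))] = J₀(a/2)⁴, where the expectation is the normalized integral over [0,2π]⁴. -/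
open Real MeasureTheory intervalIntegral

/-- Expectation over two independent pairs of angles, each uniform on `[0, 2π]²`. -/
noncomputable def E4 (f : ℝ → ℝ → ℝ → ℝ → ℝ) : ℝ :=
  (1 / (2 * π) ^ 4) *
    ∫ θ₁ in (0:ℝ)..(2 * π), ∫ φ₁ in (0:ℝ)..(2 * π),
      ∫ θ₂ in (0:ℝ)..(2 * π), ∫ φ₂ in (0:ℝ)..(2 * π), f θ₁ φ₁ θ₂ φ₂

/-- Shift invariance of the integral of a `2π`-periodic function over a period. -/
lemma per_shift {f : ℝ → ℝ} (hf : Function.Periodic f (2 * π)) (c : ℝ) :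
    ∫ x in (0:ℝ)..(2 * π), f (x + c) = ∫ x in (0:ℝ)..(2 * π), f x := by
  rw [intervalIntegral.integral_comp_add_right]
  have := hf.intervalIntegral_add_eq c 0
  simpa [add_comm] using this

lemma per_reflect {f : ℝ → ℝ} (hf : Function.Periodic f (2 * π)) :
    ∫ x in (0:ℝ)..(2 * π), f (-x) = ∫ x in (0:ℝ)..(2 * π), f x := by
  rw [intervalIntegral.integral_comp_neg]
  have := hf.intervalIntegral_add_eq (-(2 * π)) 0
  simpa using this

lemma per_double {g : ℝ → ℝ} (hg : Continuous g) (pg : Function.Periodic g (2 * π)) (d : ℝ) :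
    ∫ θ in (0:ℝ)..(2 * π), g (2 * θ + d) = ∫ v in (0:ℝ)..(2 * π), g v := by
  rw [intervalIntegral.integral_comp_mul_add g two_ne_zero d]
  have h1 : ∫ x in d..(d + 2 * π), g x = ∫ x in (0:ℝ)..(2 * π), g x := by
    simpa using pg.intervalIntegral_add_eq d 0
  have h2 : ∫ x in (d + 2 * π)..(d + 2 * π + 2 * π), g x = ∫ x in (0:ℝ)..(2 * π), g x := by
    simpa using pg.intervalIntegral_add_eq (d + 2 * π) 0
  have hint : ∀ u v : ℝ, IntervalIntegrable g volume u v := fun u v =>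
    hg.intervalIntegrable u v
  have hsplit : ∫ x in d..(d + 2 * π + 2 * π), g x
      = (∫ x in d..(d + 2 * π), g x) + ∫ x in (d + 2 * π)..(d + 2 * π + 2 * π), g x :=
    (intervalIntegral.integral_add_adjacent_intervals (hint _ _) (hint _ _)).symm
  have : 2 * 0 + d = d := by ring
  rw [this]
  have : 2 * (2 * π) + d = d + 2 * π + 2 * π := by ring
  rw [this, hsplit, h1, h2]
  simp
  ring

/-- Fubini for interval integrals of a continuous function on `[0,2π]²`. -/
lemma swap_int {F : ℝ → ℝ → ℝ} (hF : Continuous fun p : ℝ × ℝ => F p.1 p.2) :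
    ∫ x in (0:ℝ)..(2 * π), ∫ y in (0:ℝ)..(2 * π), F x y
      = ∫ y in (0:ℝ)..(2 * π), ∫ x in (0:ℝ)..(2 * π), F x y := by
  have h2π : (0:ℝ) ≤ 2 * π := by positivity
  have hInt : Integrable (Function.uncurry F)
      ((volume.restrict (Set.Ioc (0:ℝ) (2 * π))).prod
        (volume.restrict (Set.Ioc (0:ℝ) (2 * π)))) := by
    rw [Measure.prod_restrict]
    exact (hF.locallyIntegrable.integrableOn_isCompact
        (isCompact_Icc.prod isCompact_Icc)).mono_set
      (Set.prod_mono Set.Ioc_subset_Icc_self Set.Ioc_subset_Icc_self)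
  simp only [intervalIntegral.integral_of_le h2π]
  exact MeasureTheory.integral_integral_swap hInt

/-- The torus change of variables `(θ, φ) ↦ (θ - φ, θ + φ)`. -/
lemma torus_cov {F : ℝ → ℝ → ℝ} (hF : Continuous fun p : ℝ × ℝ => F p.1 p.2)
    (pF1 : ∀ v, Function.Periodic (fun u => F u v) (2 * π))
    (pF2 : ∀ u, Function.Periodic (F u) (2 * π)) :
    ∫ θ in (0:ℝ)..(2 * π), ∫ φ in (0:ℝ)..(2 * π), F (θ - φ) (θ + φ)
      = ∫ u in (0:ℝ)..(2 * π), ∫ v in (0:ℝ)..(2 * π), F u v := by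
  have step1 : ∀ θ : ℝ, (∫ φ in (0:ℝ)..(2 * π), F (θ - φ) (θ + φ))
      = ∫ φ in (0:ℝ)..(2 * π), F (-φ) (2 * θ + φ) := by
    intro θ
    have hper : Function.Periodic (fun φ => F (θ - φ) (θ + φ)) (2 * π) := by
      intro x
      have h1 : θ - (x + 2 * π) = (θ - x) - 2 * π := by ring
      have h2 : θ + (x + 2 * π) = (θ + x) + 2 * π := by ring
      simp only [h1, h2]
      rw [(pF2 _) (θ + x), ← (pF1 (θ + x)).sub_eq (θ - x)]
    have := per_shift hper θ
    calc (∫ φ in (0:ℝ)..(2 * π), F (θ - φ) (θ + φ))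
        = ∫ φ in (0:ℝ)..(2 * π), F (θ - (φ + θ)) (θ + (φ + θ)) := this.symm
      _ = ∫ φ in (0:ℝ)..(2 * π), F (-φ) (2 * θ + φ) := by
          congr 1; funext φ; congr 1 <;> ring
  rw [intervalIntegral.integral_congr (g := fun θ =>
      ∫ φ in (0:ℝ)..(2 * π), F (-φ) (2 * θ + φ)) (fun θ _ => step1 θ)]
  rw [swap_int (F := fun θ φ => F (-φ) (2 * θ + φ)) (by fun_prop)]
  have step2 : ∀ φ : ℝ, (∫ θ in (0:ℝ)..(2 * π), F (-φ) (2 * θ + φ))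
      = ∫ v in (0:ℝ)..(2 * π), F (-φ) v := by
    intro φ
    exact per_double (by fun_prop) (pF2 (-φ)) φ
  rw [intervalIntegral.integral_congr (g := fun φ => ∫ v in (0:ℝ)..(2 * π), F (-φ) v)
      (fun φ _ => step2 φ)]
  have hper : Function.Periodic (fun u => ∫ v in (0:ℝ)..(2 * π), F u v) (2 * π) := by
    intro x; simp only []; congr 1; funext v; exact (pF1 v) x
  exact per_reflect hper

lemma cos_sin_integral (b : ℝ) :
    ∫ u in (0:ℝ)..(2 * π), Real.cos (b * Real.sin u) = 2 * π * J₀ b := by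
  rw [J₀]
  have : (2:ℝ) * π ≠ 0 := by positivity
  field_simp

lemma sin_sin_integral (b : ℝ) :
    ∫ u in (0:ℝ)..(2 * π), Real.sin (b * Real.sin u) = 0 := by
  have hper : Function.Periodic (fun u => Real.sin (b * Real.sin u)) (2 * π) := by
    intro x; simp [Real.sin_add_two_pi]
  have h := per_shift hper π
  have : ∀ x : ℝ, Real.sin (b * Real.sin (x + π)) = -Real.sin (b * Real.sin x) := by
    intro x; rw [Real.sin_add_pi]; rw [show b * -Real.sin x = -(b * Real.sin x) by ring,
      Real.sin_neg]
  rw [intervalIntegral.integral_congr (g := fun x => -Real.sin (b * Real.sin x))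
      (fun x _ => this x), intervalIntegral.integral_neg] at h
  linarith

lemma cos_cos_integral (c : ℝ) :
    ∫ u in (0:ℝ)..(2 * π), Real.cos (c * Real.cos u) = 2 * π * J₀ c := by
  have hper : Function.Periodic (fun u => Real.cos (c * Real.cos u)) (2 * π) := by
    intro x; simp [Real.cos_add_two_pi]
  have h := per_shift hper (π / 2)
  have heq : ∀ x : ℝ, Real.cos (c * Real.cos (x + π / 2)) = Real.cos (c * Real.sin x) := by
    intro x; rw [Real.cos_add_pi_div_two, show c * -Real.sin x = -(c * Real.sin x) by ring,
      Real.cos_neg]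
  rw [intervalIntegral.integral_congr (g := fun x => Real.cos (c * Real.sin x))
      (fun x _ => heq x)] at h
  rw [← h]
  exact cos_sin_integral c

lemma sin_cos_integral (c : ℝ) :
    ∫ u in (0:ℝ)..(2 * π), Real.sin (c * Real.cos u) = 0 := by
  have hper : Function.Periodic (fun u => Real.sin (c * Real.cos u)) (2 * π) := by
    intro x; simp [Real.cos_add_two_pi]
  have h := per_shift hper π
  have heq : ∀ x : ℝ, Real.sin (c * Real.cos (x + π)) = -Real.sin (c * Real.cos x) := by
    intro x; rw [Real.cos_add_pi, show c * -Real.cos x = -(c * Real.cos x) by ring,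
      Real.sin_neg]
  rw [intervalIntegral.integral_congr (g := fun x => -Real.sin (c * Real.cos x))
      (fun x _ => heq x), intervalIntegral.integral_neg] at h
  linarith

/-- The key double-integral identity. -/
lemma D_eq (a : ℝ) :
    ∫ θ in (0:ℝ)..(2 * π), ∫ φ in (0:ℝ)..(2 * π), Real.cos (a * (Real.sin θ * Real.sin φ))
      = (2 * π * J₀ (a / 2)) ^ 2 := by
  set c := a / 2 with hc
  have key : ∀ θ φ : ℝ, a * (Real.sin θ * Real.sin φ)
      = c * Real.cos (θ - φ) - c * Real.cos (θ + φ) := by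
    intro θ φ
    rw [Real.cos_sub, Real.cos_add, hc]; ring
  have step : ∀ θ φ : ℝ, Real.cos (a * (Real.sin θ * Real.sin φ))
      = (fun u v => Real.cos (c * Real.cos u - c * Real.cos v)) (θ - φ) (θ + φ) := by
    intro θ φ; rw [key]
  calc (∫ θ in (0:ℝ)..(2 * π), ∫ φ in (0:ℝ)..(2 * π),
          Real.cos (a * (Real.sin θ * Real.sin φ)))
      = ∫ θ in (0:ℝ)..(2 * π), ∫ φ in (0:ℝ)..(2 * π),
          (fun u v => Real.cos (c * Real.cos u - c * Real.cos v)) (θ - φ) (θ + φ) := by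
        apply intervalIntegral.integral_congr; intro θ _
        apply intervalIntegral.integral_congr; intro φ _
        exact step θ φ
    _ = ∫ u in (0:ℝ)..(2 * π), ∫ v in (0:ℝ)..(2 * π),
          (fun u v => Real.cos (c * Real.cos u - c * Real.cos v)) u v := by
        apply torus_cov (F := fun u v => Real.cos (c * Real.cos u - c * Real.cos v))
          (by fun_prop)
        · intro v x; simp [Real.cos_add_two_pi]
        · intro u x; simp [Real.cos_add_two_pi]
    _ = ∫ u in (0:ℝ)..(2 * π),
          (Real.cos (c * Real.cos u) * (2 * π * J₀ c)) := by
        apply intervalIntegral.integral_congr; intro u _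
        beta_reduce
        have expand : ∀ v : ℝ, Real.cos (c * Real.cos u - c * Real.cos v)
            = Real.cos (c * Real.cos u) * Real.cos (c * Real.cos v)
              + Real.sin (c * Real.cos u) * Real.sin (c * Real.cos v) := by
          intro v; rw [Real.cos_sub]
        rw [intervalIntegral.integral_congr (fun v _ => expand v),
          intervalIntegral.integral_add ((by fun_prop : Continuous fun v =>
            Real.cos (c * Real.cos u) * Real.cos (c * Real.cos v)).intervalIntegrable _ _)
            ((by fun_prop : Continuous fun v =>
            Real.sin (c * Real.cos u) * Real.sin (c * Real.cos v)).intervalIntegrable _ _),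
          intervalIntegral.integral_const_mul, intervalIntegral.integral_const_mul,
          cos_cos_integral, sin_cos_integral]
        ring
    _ = (2 * π * J₀ c) ^ 2 := by
        rw [intervalIntegral.integral_mul_const, cos_cos_integral]
        ring

theorem stmt_2 (a : ℝ) :
    E4 (fun θ₁ φ₁ θ₂ φ₂ =>
      Real.cos (a * (Real.sin θ₁ * Real.sin φ₁ - Real.sin θ₂ * Real.sin φ₂)))
    = (J₀ (a / 2)) ^ 4 := by
  rw [E4]
  set D : ℝ := ∫ θ in (0:ℝ)..(2 * π), ∫ φ in (0:ℝ)..(2 * π),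
      Real.cos (a * (Real.sin θ * Real.sin φ)) with hD
  have inner4 : ∀ θ₁ φ₁ θ₂ : ℝ,
      (∫ φ₂ in (0:ℝ)..(2 * π),
        Real.cos (a * (Real.sin θ₁ * Real.sin φ₁ - Real.sin θ₂ * Real.sin φ₂)))
      = Real.cos (a * (Real.sin θ₁ * Real.sin φ₁)) *
          ∫ φ in (0:ℝ)..(2 * π), Real.cos (a * (Real.sin θ₂ * Real.sin φ)) := by
    intro θ₁ φ₁ θ₂
    set C := a * (Real.sin θ₁ * Real.sin φ₁) with hC
    set b := a * Real.sin θ₂ with hb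
    have expand : ∀ φ : ℝ,
        Real.cos (a * (Real.sin θ₁ * Real.sin φ₁ - Real.sin θ₂ * Real.sin φ))
        = Real.cos C * Real.cos (b * Real.sin φ) + Real.sin C * Real.sin (b * Real.sin φ) := by
      intro φ
      rw [show a * (Real.sin θ₁ * Real.sin φ₁ - Real.sin θ₂ * Real.sin φ)
          = C - b * Real.sin φ by rw [hC, hb]; ring, Real.cos_sub]
    rw [intervalIntegral.integral_congr (fun φ _ => expand φ),
      intervalIntegral.integral_add
        ((by fun_prop : Continuous fun φ =>
          Real.cos C * Real.cos (b * Real.sin φ)).intervalIntegrable _ _)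
        ((by fun_prop : Continuous fun φ =>
          Real.sin C * Real.sin (b * Real.sin φ)).intervalIntegrable _ _),
      intervalIntegral.integral_const_mul, intervalIntegral.integral_const_mul,
      sin_sin_integral]
    have : ∀ φ : ℝ, Real.cos (a * (Real.sin θ₂ * Real.sin φ)) = Real.cos (b * Real.sin φ) := by
      intro φ; rw [hb]; ring_nf
    rw [intervalIntegral.integral_congr (fun φ _ => this φ)]
    ring
  have inner3 : ∀ θ₁ φ₁ : ℝ,
      (∫ θ₂ in (0:ℝ)..(2 * π), ∫ φ₂ in (0:ℝ)..(2 * π),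
        Real.cos (a * (Real.sin θ₁ * Real.sin φ₁ - Real.sin θ₂ * Real.sin φ₂)))
      = Real.cos (a * (Real.sin θ₁ * Real.sin φ₁)) * D := by
    intro θ₁ φ₁
    rw [intervalIntegral.integral_congr (fun θ₂ _ => inner4 θ₁ φ₁ θ₂),
      intervalIntegral.integral_const_mul, hD]
  have inner2 : ∀ θ₁ : ℝ,
      (∫ φ₁ in (0:ℝ)..(2 * π), ∫ θ₂ in (0:ℝ)..(2 * π), ∫ φ₂ in (0:ℝ)..(2 * π),
        Real.cos (a * (Real.sin θ₁ * Real.sin φ₁ - Real.sin θ₂ * Real.sin φ₂)))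
      = (∫ φ₁ in (0:ℝ)..(2 * π), Real.cos (a * (Real.sin θ₁ * Real.sin φ₁))) * D := by
    intro θ₁
    rw [intervalIntegral.integral_congr (fun φ₁ _ => inner3 θ₁ φ₁),
      intervalIntegral.integral_mul_const]
  have inner1 :
      (∫ θ₁ in (0:ℝ)..(2 * π), ∫ φ₁ in (0:ℝ)..(2 * π), ∫ θ₂ in (0:ℝ)..(2 * π),
        ∫ φ₂ in (0:ℝ)..(2 * π),
        Real.cos (a * (Real.sin θ₁ * Real.sin φ₁ - Real.sin θ₂ * Real.sin φ₂)))
      = D * D := by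
    rw [intervalIntegral.integral_congr (fun θ₁ _ => inner2 θ₁),
      intervalIntegral.integral_mul_const, ← hD]
  rw [inner1, hD, D_eq]
  have hπ : (2:ℝ) * π ≠ 0 := by positivity
  field_simp
end

section
/- Let (θ₁, φ₁) and (θ₂, φ₂) be independent, each uniformly distributed on [0,2π]², and set h₁ := sin θ₁·sin φ₁, h₂ := sin θ₂·sin φ₂. Fix a real number a and a natural number n_R ≥ 1, and define F₁₂ := Σ_{s=1}^{n_R−1} (n_R − s)·cos(s·a·(h₁ − h₂)). Then E[F₁₂] = Σ_{s=1}^{n_R−1} (n_R − s)·J₀(s·a/2)⁴. -/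
open Real MeasureTheory Finset

lemma twopi_pos : (0:ℝ) < 2 * π := by positivity

/-- Shifting a `2π`-periodic function does not change its integral over `[0, 2π]`. -/
lemma shift_int (g : ℝ → ℝ) (hp : Function.Periodic g (2 * π)) (r : ℝ) :
    ∫ t in (0:ℝ)..(2 * π), g (t + r) = ∫ t in (0:ℝ)..(2 * π), g t := by
  rw [intervalIntegral.integral_comp_add_right]
  have h := hp.intervalIntegral_add_eq r 0
  simpa [zero_add, add_comm] using h

lemma int_cos (x : ℝ) : ∫ t in (0:ℝ)..(2 * π), Real.cos (x * Real.sin t) = 2 * π * J₀ x := by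
  unfold J₀
  have h : (2 * π) ≠ 0 := ne_of_gt twopi_pos
  field_simp

lemma periodic_cos_sin (x : ℝ) : Function.Periodic (fun t => Real.cos (x * Real.sin t)) (2 * π) :=
  fun t => by simp [Real.sin_add_two_pi]

lemma int_cos_cos (x : ℝ) : ∫ t in (0:ℝ)..(2 * π), Real.cos (x * Real.cos t) = 2 * π * J₀ x := by
  have h := shift_int (fun t => Real.cos (x * Real.sin t)) (periodic_cos_sin x) (π / 2)
  simp only [Real.sin_add_pi_div_two] at h
  rw [h, int_cos]

lemma int_sin_zero (x : ℝ) : ∫ t in (0:ℝ)..(2 * π), Real.sin (x * Real.sin t) = 0 := by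
  have h : ∫ t in (0:ℝ)..(2 * π), Real.sin (x * Real.sin (2 * π - t))
      = ∫ t in (0:ℝ)..(2 * π), Real.sin (x * Real.sin t) := by
    have := intervalIntegral.integral_comp_sub_left (a := (0:ℝ)) (b := 2 * π)
      (fun t => Real.sin (x * Real.sin t)) (2 * π)
    simpa using this
  simp only [Real.sin_two_pi_sub, mul_neg, Real.sin_neg, intervalIntegral.integral_neg] at h
  linarith

lemma contJ : Continuous J₀ := by
  unfold J₀
  exact continuous_const.mul
    (intervalIntegral.continuous_parametric_intervalIntegral_of_continuous' (by fun_prop) 0 (2 * π))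

lemma J0_even (x : ℝ) : J₀ (-x) = J₀ x := by
  unfold J₀
  congr 1
  apply intervalIntegral.integral_congr
  intro t _
  simp [neg_mul]

lemma swap_int_s3 (F : ℝ → ℝ → ℝ) (hF : Continuous (Function.uncurry F))
    (hb : ∀ u s, |F u s| ≤ 1) :
    ∫ u in (0:ℝ)..(2 * π), ∫ s in (0:ℝ)..(2 * π), F u s
      = ∫ s in (0:ℝ)..(2 * π), ∫ u in (0:ℝ)..(2 * π), F u s := by
  have hle : (0:ℝ) ≤ 2 * π := twopi_pos.le
  simp only [intervalIntegral.integral_of_le hle]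
  set μ := volume.restrict (Set.Ioc (0:ℝ) (2 * π)) with hμ
  haveI : IsFiniteMeasure μ := ⟨by rw [Measure.restrict_apply_univ]; exact measure_Ioc_lt_top⟩
  have hint : Integrable (Function.uncurry F) (μ.prod μ) := by
    refine Integrable.mono' (integrable_const 1) hF.aestronglyMeasurable ?_
    exact ae_of_all _ fun p => by simpa [Function.uncurry] using hb p.1 p.2
  exact MeasureTheory.integral_integral_swap hint

lemma flip_int (A z : ℝ) :
    ∫ t in (0:ℝ)..(2 * π), Real.cos (A + z * Real.sin t)
      = ∫ t in (0:ℝ)..(2 * π), Real.cos (A - z * Real.sin t) := by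
  have h := intervalIntegral.integral_comp_sub_left (a := (0:ℝ)) (b := 2 * π)
    (fun t => Real.cos (A + z * Real.sin t)) (2 * π)
  simp only [Real.sin_two_pi_sub, mul_neg, ← sub_eq_add_neg, sub_zero, sub_self] at h
  exact h.symm

/-- Neumann's identity: the average of `J₀ (2 z sin t)` over a period is `J₀(z)²`. -/
lemma neumann (z : ℝ) :
    ∫ t in (0:ℝ)..(2 * π), J₀ (2 * z * Real.sin t) = 2 * π * (J₀ z) ^ 2 := by
  have hii : ∀ (f : ℝ → ℝ), Continuous f → ∀ a b : ℝ, IntervalIntegrable f volume a b :=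
    fun f hf a b => hf.intervalIntegrable a b
  -- Step 1: square as double integral
  have step1 : (2 * π * J₀ z) * (2 * π * J₀ z)
      = ∫ s in (0:ℝ)..(2 * π), ∫ t in (0:ℝ)..(2 * π),
          Real.cos (z * Real.sin s) * Real.cos (z * Real.sin t) := by
    rw [← int_cos z]
    rw [← intervalIntegral.integral_mul_const]
    apply intervalIntegral.integral_congr
    intro s _
    simp only
    rw [← intervalIntegral.integral_const_mul]
  -- Step 2: inner integral reduces to cos of difference
  have step2 : ∀ s : ℝ, ∫ t in (0:ℝ)..(2 * π),
      Real.cos (z * Real.sin s) * Real.cos (z * Real.sin t)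
      = ∫ t in (0:ℝ)..(2 * π), Real.cos (z * Real.sin s - z * Real.sin t) := by
    intro s
    have hrw : ∀ t : ℝ, Real.cos (z * Real.sin s) * Real.cos (z * Real.sin t)
        = (Real.cos (z * Real.sin s - z * Real.sin t)
          + Real.cos (z * Real.sin s + z * Real.sin t)) / 2 := by
      intro t
      rw [Real.cos_sub, Real.cos_add]; ring
    simp only [hrw]
    rw [intervalIntegral.integral_div,
      intervalIntegral.integral_add (hii _ (by fun_prop) _ _) (hii _ (by fun_prop) _ _),
      flip_int]
    ring
  -- Step 3: shift in t
  have step3 : ∀ s : ℝ, ∫ t in (0:ℝ)..(2 * π), Real.cos (z * Real.sin s - z * Real.sin t)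
      = ∫ u in (0:ℝ)..(2 * π), Real.cos (2 * z * Real.sin (u / 2) * Real.cos (s + u / 2)) := by
    intro s
    have hper : Function.Periodic (fun t => Real.cos (z * Real.sin s - z * Real.sin t)) (2 * π) :=
      fun t => by simp [Real.sin_add_two_pi]
    rw [← shift_int _ hper s]
    apply intervalIntegral.integral_congr
    intro u _
    simp only
    rw [show z * Real.sin s - z * Real.sin (u + s)
        = -(2 * z * Real.sin (u / 2) * Real.cos (s + u / 2)) by
      rw [← mul_sub, Real.sin_sub_sin]
      rw [show (s - (u + s)) / 2 = -(u / 2) by ring, show (s + (u + s)) / 2 = s + u / 2 by ring,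
        Real.sin_neg]
      ring]
    rw [Real.cos_neg]
  -- Step 4: swap and evaluate the inner integral
  have step4 : ∫ s in (0:ℝ)..(2 * π), ∫ u in (0:ℝ)..(2 * π),
      Real.cos (2 * z * Real.sin (u / 2) * Real.cos (s + u / 2))
      = ∫ u in (0:ℝ)..(2 * π), 2 * π * J₀ (2 * z * Real.sin (u / 2)) := by
    rw [swap_int_s3 (fun s u => Real.cos (2 * z * Real.sin (u / 2) * Real.cos (s + u / 2)))
      (by fun_prop) (fun u s => Real.abs_cos_le_one _)]
    apply intervalIntegral.integral_congr
    intro u _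
    simp only
    have hper : Function.Periodic
        (fun s => Real.cos (2 * z * Real.sin (u / 2) * Real.cos s)) (2 * π) :=
      fun s => by simp [Real.cos_add_two_pi]
    have h := shift_int _ hper (u / 2)
    rw [h, int_cos_cos]
  -- Step 5: substitution `u = 2 v` and symmetry
  have half : ∫ u in (0:ℝ)..(2 * π), J₀ (2 * z * Real.sin (u / 2))
      = ∫ v in (0:ℝ)..(2 * π), J₀ (2 * z * Real.sin v) := by
    have hc : (2:ℝ) ≠ 0 := two_ne_zero
    have hcomp := intervalIntegral.integral_comp_div (a := (0:ℝ)) (b := 2 * π)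
      (f := fun v => J₀ (2 * z * Real.sin v)) hc
    rw [hcomp]
    have hi : ∀ a b : ℝ, IntervalIntegrable (fun v => J₀ (2 * z * Real.sin v)) volume a b :=
      fun a b => (contJ.comp (by fun_prop)).intervalIntegrable a b
    have hsplit := intervalIntegral.integral_add_adjacent_intervals (hi 0 π) (hi π (2 * π))
    have hshift : ∫ v in π..(2 * π), J₀ (2 * z * Real.sin v)
        = ∫ v in (0:ℝ)..π, J₀ (2 * z * Real.sin v) := by
      have h := intervalIntegral.integral_comp_add_right (a := (0:ℝ)) (b := π)
        (fun v => J₀ (2 * z * Real.sin v)) π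
      rw [show (0:ℝ) + π = π by ring, show π + π = 2 * π by ring] at h
      rw [← h]
      apply intervalIntegral.integral_congr
      intro v _
      simp only
      rw [Real.sin_add_pi, show 2 * z * -Real.sin v = -(2 * z * Real.sin v) by ring, J0_even]
    rw [show (0:ℝ) / 2 = 0 by ring, show 2 * π / 2 = π by ring]
    rw [← hsplit, hshift]
    simp [smul_eq_mul]
    ring
  -- combine
  have key : (2 * π * J₀ z) * (2 * π * J₀ z)
      = 2 * π * ∫ v in (0:ℝ)..(2 * π), J₀ (2 * z * Real.sin v) := by
    rw [step1]
    rw [intervalIntegral.integral_congr (g := fun s => ∫ t in (0:ℝ)..(2 * π),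
      Real.cos (z * Real.sin s - z * Real.sin t)) (fun s _ => step2 s)]
    rw [intervalIntegral.integral_congr (g := fun s => ∫ u in (0:ℝ)..(2 * π),
      Real.cos (2 * z * Real.sin (u / 2) * Real.cos (s + u / 2))) (fun s _ => step3 s)]
    rw [step4, intervalIntegral.integral_const_mul, half]
  have h2π : (2 * π) ≠ 0 := ne_of_gt twopi_pos
  have := mul_left_cancel₀ h2π (by rw [← key]; ring :
    2 * π * (2 * π * (J₀ z) ^ 2) = 2 * π * ∫ v in (0:ℝ)..(2 * π), J₀ (2 * z * Real.sin v))
  linarith [this]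

lemma inner_phi (c H y : ℝ) :
    ∫ φ in (0:ℝ)..(2 * π), Real.cos (c * (H - y * Real.sin φ))
      = Real.cos (c * H) * (2 * π * J₀ (c * y)) := by
  have hrw : ∀ φ : ℝ, Real.cos (c * (H - y * Real.sin φ))
      = Real.cos (c * H) * Real.cos (c * y * Real.sin φ)
        + Real.sin (c * H) * Real.sin (c * y * Real.sin φ) := by
    intro φ
    rw [show c * (H - y * Real.sin φ) = c * H - c * y * Real.sin φ by ring, Real.cos_sub]
  simp only [hrw]
  rw [intervalIntegral.integral_add ((by fun_prop : Continuous _).intervalIntegrable _ _)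
      ((by fun_prop : Continuous _).intervalIntegrable _ _),
    intervalIntegral.integral_const_mul, intervalIntegral.integral_const_mul,
    int_cos, int_sin_zero]
  ring

lemma double_JJ (c H : ℝ) :
    ∫ θ in (0:ℝ)..(2 * π), ∫ φ in (0:ℝ)..(2 * π),
        Real.cos (c * (H - Real.sin θ * Real.sin φ))
      = Real.cos (c * H) * ((2 * π) ^ 2 * (J₀ (c / 2)) ^ 2) := by
  rw [intervalIntegral.integral_congr (g := fun θ =>
    Real.cos (c * H) * (2 * π * J₀ (c * Real.sin θ)))
    (fun θ _ => by simpa using inner_phi c H (Real.sin θ))]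
  rw [intervalIntegral.integral_const_mul, intervalIntegral.integral_const_mul]
  have h : ∫ θ in (0:ℝ)..(2 * π), J₀ (c * Real.sin θ) = 2 * π * (J₀ (c / 2)) ^ 2 := by
    have := neumann (c / 2)
    rw [show (2:ℝ) * (c / 2) = c by ring] at this
    exact this
  rw [h]; ring

lemma double_cos (c : ℝ) :
    ∫ θ in (0:ℝ)..(2 * π), ∫ φ in (0:ℝ)..(2 * π), Real.cos (c * (Real.sin θ * Real.sin φ))
      = (2 * π) ^ 2 * (J₀ (c / 2)) ^ 2 := by
  have h := double_JJ c 0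
  simp only [Real.cos_zero, mul_zero, one_mul] at h
  rw [← h]
  apply intervalIntegral.integral_congr
  intro θ _
  apply intervalIntegral.integral_congr
  intro φ _
  simp only
  rw [show c * ((0:ℝ) - Real.sin θ * Real.sin φ) = -(c * (Real.sin θ * Real.sin φ)) by ring,
    Real.cos_neg]

lemma double_sum (S : Finset ℕ) (f : ℕ → ℝ → ℝ → ℝ)
    (hf : ∀ s, Continuous (fun p : ℝ × ℝ => f s p.1 p.2)) :
    ∫ θ in (0:ℝ)..(2 * π), ∫ φ in (0:ℝ)..(2 * π), ∑ s ∈ S, f s θ φ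
      = ∑ s ∈ S, ∫ θ in (0:ℝ)..(2 * π), ∫ φ in (0:ℝ)..(2 * π), f s θ φ := by
  rw [intervalIntegral.integral_congr (g := fun θ =>
      ∑ s ∈ S, ∫ φ in (0:ℝ)..(2 * π), f s θ φ)
    (fun θ _ => intervalIntegral.integral_finset_sum (fun s _ =>
      (((hf s).comp (Continuous.prodMk_right θ)).intervalIntegrable _ _)))]
  exact intervalIntegral.integral_finset_sum (fun s _ =>
    ((intervalIntegral.continuous_parametric_intervalIntegral_of_continuous'
      (f := fun θ φ => f s θ φ) (hf s) 0 (2 * π)).intervalIntegrable _ _))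

theorem stmt_3 (a : ℝ) (nR : ℕ) (hR : 1 ≤ nR) :
    E4 (fun θ₁ φ₁ θ₂ φ₂ =>
      ∑ s ∈ Finset.Icc 1 (nR - 1), ((nR : ℝ) - s) *
        Real.cos ((s : ℝ) * a *
          (Real.sin θ₁ * Real.sin φ₁ - Real.sin θ₂ * Real.sin φ₂)))
    = ∑ s ∈ Finset.Icc 1 (nR - 1), ((nR : ℝ) - s) * (J₀ ((s : ℝ) * a / 2)) ^ 4 := by
  unfold E4
  have hπ : π ≠ 0 := Real.pi_ne_zero
  have L : ∀ θ₁ φ₁ : ℝ,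
      (∫ θ₂ in (0:ℝ)..(2 * π), ∫ φ₂ in (0:ℝ)..(2 * π),
        ∑ s ∈ Finset.Icc 1 (nR - 1), ((nR : ℝ) - s) *
          Real.cos ((s : ℝ) * a *
            (Real.sin θ₁ * Real.sin φ₁ - Real.sin θ₂ * Real.sin φ₂)))
      = ∑ s ∈ Finset.Icc 1 (nR - 1),
          (((nR : ℝ) - s) * ((2 * π) ^ 2 * (J₀ ((s : ℝ) * a / 2)) ^ 2)) *
            Real.cos ((s : ℝ) * a * (Real.sin θ₁ * Real.sin φ₁)) := by
    intro θ₁ φ₁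
    rw [double_sum _ (fun s θ₂ φ₂ => ((nR : ℝ) - s) *
        Real.cos ((s : ℝ) * a *
          (Real.sin θ₁ * Real.sin φ₁ - Real.sin θ₂ * Real.sin φ₂)))
      (fun s => by fun_prop)]
    refine Finset.sum_congr rfl fun s _ => ?_
    simp only [intervalIntegral.integral_const_mul]
    rw [double_JJ ((s : ℝ) * a) (Real.sin θ₁ * Real.sin φ₁)]
    ring
  have main : (∫ θ₁ in (0:ℝ)..(2 * π), ∫ φ₁ in (0:ℝ)..(2 * π),
        ∫ θ₂ in (0:ℝ)..(2 * π), ∫ φ₂ in (0:ℝ)..(2 * π),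
          ∑ s ∈ Finset.Icc 1 (nR - 1), ((nR : ℝ) - s) *
            Real.cos ((s : ℝ) * a *
              (Real.sin θ₁ * Real.sin φ₁ - Real.sin θ₂ * Real.sin φ₂)))
      = ∑ s ∈ Finset.Icc 1 (nR - 1),
          (((nR : ℝ) - s) * ((2 * π) ^ 2 * (J₀ ((s : ℝ) * a / 2)) ^ 2)) *
            ((2 * π) ^ 2 * (J₀ ((s : ℝ) * a / 2)) ^ 2) := by
    rw [intervalIntegral.integral_congr (g := fun θ₁ => ∫ φ₁ in (0:ℝ)..(2 * π),
        ∑ s ∈ Finset.Icc 1 (nR - 1),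
          (((nR : ℝ) - s) * ((2 * π) ^ 2 * (J₀ ((s : ℝ) * a / 2)) ^ 2)) *
            Real.cos ((s : ℝ) * a * (Real.sin θ₁ * Real.sin φ₁)))
      (fun θ₁ _ => intervalIntegral.integral_congr (fun φ₁ _ => L θ₁ φ₁))]
    rw [double_sum _ (fun s θ φ =>
        (((nR : ℝ) - s) * ((2 * π) ^ 2 * (J₀ ((s : ℝ) * a / 2)) ^ 2)) *
          Real.cos ((s : ℝ) * a * (Real.sin θ * Real.sin φ)))
      (fun s => by fun_prop)]
    refine Finset.sum_congr rfl fun s _ => ?_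
    simp only [intervalIntegral.integral_const_mul]
    rw [double_cos ((s : ℝ) * a)]
  rw [main, Finset.mul_sum]
  refine Finset.sum_congr rfl fun s _ => ?_
  field_simp
end
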